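/- Approximate correctability implies approximate distinguishability preservation: let N be a quantum channel from a d_A-dimensional system A (with d_A ≥ 2) to a d_B-dimensional system B, and suppose there exists a quantum channel R from B to A such that ‖R(N(ρ)) − ρ‖₁ ≤ ε for every density matrix ρ on A. Then DP_min(N) ≥ 1 − 2ε. -/

import Mathlib

open Matrix ComplexOrder

/-- Trace norm of a square complex matrix. -/
noncomputable def traceNorm {n : Type*} [Fintype n] [DecidableEq n]
    (X : Matrix n n ℂ) : ℝ :=
  (((Matrix.posSemidef_conjTranspose_mul_self X).1.eigenvectorUnitary.1 *
      diagonal ((fun x : ℝ => (x : ℂ)) ∘ (√·) ∘ (Matrix.posSemidef_conjTranspose_mul_self X).1.eigenvalues) *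
      (star (Matrix.posSemidef_conjTranspose_mul_self X).1.eigenvectorUnitary : Matrix n n ℂ)).trace).re

/-- A density matrix: positive semidefinite with unit trace. -/
def IsDensityMatrix {n : Type*} [Fintype n] [DecidableEq n] (ρ : Matrix n n ℂ) : Prop :=
  ρ.PosSemidef ∧ ρ.trace = 1

/-- A quantum channel: a linear map admitting a Kraus representation. -/
def IsQuantumChannel {dA dB : ℕ}
    (N : Matrix (Fin dA) (Fin dA) ℂ →ₗ[ℂ] Matrix (Fin dB) (Fin dB) ℂ) : Prop :=
  ∃ (k : ℕ) (K : Fin k → Matrix (Fin dB) (Fin dA) ℂ),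
    (∀ X, N X = ∑ i, K i * X * (K i)ᴴ) ∧ (∑ i, (K i)ᴴ * K i = 1)

/-- Maximum causal effect. -/
noncomputable def CEmax {dA dB : ℕ}
    (N : Matrix (Fin dA) (Fin dA) ℂ →ₗ[ℂ] Matrix (Fin dB) (Fin dB) ℂ) : ℝ :=
  sSup {x : ℝ | ∃ ρ ρ' : Matrix (Fin dA) (Fin dA) ℂ,
    IsDensityMatrix ρ ∧ IsDensityMatrix ρ' ∧ ρ ≠ ρ' ∧
    x = traceNorm (N ρ - N ρ') / traceNorm (ρ - ρ')}

/-- Minimum causal effect. -/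
noncomputable def CEmin {dA dB : ℕ}
    (N : Matrix (Fin dA) (Fin dA) ℂ →ₗ[ℂ] Matrix (Fin dB) (Fin dB) ℂ) : ℝ :=
  sInf {x : ℝ | ∃ ρ ρ' : Matrix (Fin dA) (Fin dA) ℂ,
    IsDensityMatrix ρ ∧ IsDensityMatrix ρ' ∧ ρ ≠ ρ' ∧
    x = traceNorm (N ρ - N ρ') / traceNorm (ρ - ρ')}

/-- Minimum distinguishability preservation. -/
noncomputable def DPmin {dA dB : ℕ}
    (N : Matrix (Fin dA) (Fin dA) ℂ →ₗ[ℂ] Matrix (Fin dB) (Fin dB) ℂ) : ℝ :=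
  sInf {x : ℝ | ∃ p : ℝ, 0 ≤ p ∧ p ≤ 1 ∧
    ∃ ρ ρ' : Matrix (Fin dA) (Fin dA) ℂ,
      IsDensityMatrix ρ ∧ IsDensityMatrix ρ' ∧ ρ ≠ ρ' ∧
      x = traceNorm ((p : ℂ) • N ρ - ((1 - p : ℝ) : ℂ) • N ρ') /
          traceNorm ((p : ℂ) • ρ - ((1 - p : ℝ) : ℂ) • ρ')}

section TraceNormBasics
variable {n : Type*} [Fintype n] [DecidableEq n]

open scoped MatrixOrder in
lemma traceNorm_eq_cfcSqrt (X : Matrix n n ℂ) :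
    traceNorm X = (CFC.sqrt (Xᴴ * X)).trace.re := by
  rw [traceNorm, CFC.sqrt_eq_cfc, cfc_nnreal_eq_real _ (Xᴴ * X) (posSemidef_conjTranspose_mul_self X).nonneg,
    (posSemidef_conjTranspose_mul_self X).1.cfc_eq, IsHermitian.cfc, Unitary.conjStarAlgAut_apply]
  congr 6
  funext i
  simp only [Function.comp_apply, Real.coe_sqrt, Real.coe_toNNReal',
    max_eq_left ((posSemidef_conjTranspose_mul_self X).eigenvalues_nonneg i)]

lemma traceNorm_congr {X Y : Matrix n n ℂ} (h : Xᴴ * X = Yᴴ * Y) :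
    traceNorm X = traceNorm Y := by
  rw [traceNorm_eq_cfcSqrt, traceNorm_eq_cfcSqrt, h]

lemma traceNorm_sqrt_eq {X : Matrix n n ℂ} {S : Matrix n n ℂ} (hS : S.PosSemidef)
    (h : S ^ 2 = Xᴴ * X) : traceNorm X = S.trace.re := by
  open scoped MatrixOrder in
  rw [traceNorm_eq_cfcSqrt, CFC.sqrt_unique (b := S) (by rw [← h, sq]) hS.nonneg]

/-- conjugation of a real diagonal by the eigenvector unitary of a Hermitian matrix -/
noncomputable def herm.conj {A : Matrix n n ℂ} (hA : A.IsHermitian) (f : n → ℝ) :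
    Matrix n n ℂ :=
  (hA.eigenvectorUnitary : Matrix n n ℂ) * diagonal (Complex.ofReal ∘ f) *
    star (hA.eigenvectorUnitary : Matrix n n ℂ)

lemma herm.conj_mul {A : Matrix n n ℂ} (hA : A.IsHermitian) (f g : n → ℝ) :
    herm.conj hA f * herm.conj hA g = herm.conj hA (f * g) := by
  unfold herm.conj
  have h1 : star (hA.eigenvectorUnitary : Matrix n n ℂ) *
      (hA.eigenvectorUnitary : Matrix n n ℂ) = 1 := mem_unitaryGroup_iff'.mp hA.eigenvectorUnitary.2
  simp only [mul_assoc]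
  rw [← mul_assoc (star (hA.eigenvectorUnitary : Matrix n n ℂ))
    (hA.eigenvectorUnitary : Matrix n n ℂ), h1, one_mul,
    ← mul_assoc (diagonal _) (diagonal _), diagonal_mul_diagonal,
    show (fun i => (Complex.ofReal ∘ f) i * (Complex.ofReal ∘ g) i) = (Complex.ofReal ∘ (f * g))
      from funext fun i => by simp]

lemma herm.conj_posSemidef {A : Matrix n n ℂ} (hA : A.IsHermitian) {f : n → ℝ}
    (hf : ∀ i, 0 ≤ f i) : (herm.conj hA f).PosSemidef := by
  apply PosSemidef.mul_mul_conjTranspose_same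
  refine posSemidef_diagonal_iff.mpr fun i => ?_
  rw [Function.comp_apply, RCLike.nonneg_iff]
  simpa using hf i

lemma herm.conj_trace {A : Matrix n n ℂ} (hA : A.IsHermitian) (f : n → ℝ) :
    (herm.conj hA f).trace = ∑ i, (f i : ℂ) := by
  unfold herm.conj
  rw [trace_mul_cycle, mem_unitaryGroup_iff'.mp hA.eigenvectorUnitary.2, one_mul,
    trace_diagonal]
  rfl

lemma herm.conj_eigenvalues {A : Matrix n n ℂ} (hA : A.IsHermitian) :
    herm.conj hA hA.eigenvalues = A := (hA.spectral_theorem).symm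

lemma herm.conj_sub {A : Matrix n n ℂ} (hA : A.IsHermitian) (f g : n → ℝ) :
    herm.conj hA f - herm.conj hA g = herm.conj hA (f - g) := by
  unfold herm.conj
  rw [← sub_mul, ← mul_sub]
  rw [diagonal_sub,
    show (fun i => (Complex.ofReal ∘ f) i - (Complex.ofReal ∘ g) i) = (Complex.ofReal ∘ (f - g))
      from funext fun i => by simp]

-- new material
lemma diagonal_ofReal_zero : diagonal (Complex.ofReal ∘ (0 : n → ℝ)) = (0 : Matrix n n ℂ) := by
  ext i j
  by_cases h : i = j <;> simp [diagonal_apply, h]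

lemma herm.conj_zero_fun {A : Matrix n n ℂ} (hA : A.IsHermitian) :
    herm.conj hA (0 : n → ℝ) = 0 := by
  unfold herm.conj
  rw [diagonal_ofReal_zero, mul_zero, zero_mul]

lemma herm.conj_smul {A : Matrix n n ℂ} (hA : A.IsHermitian) (c : ℝ) (f : n → ℝ) :
    (c : ℂ) • herm.conj hA f = herm.conj hA (c • f) := by
  unfold herm.conj
  have hd : (c : ℂ) • diagonal (Complex.ofReal ∘ f) = diagonal (Complex.ofReal ∘ (c • f)) := by
    ext i j
    by_cases h : i = j <;> simp [diagonal_apply, h]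
  rw [← hd, Matrix.mul_smul, Matrix.smul_mul]

lemma herm.conj_sq {A : Matrix n n ℂ} (hA : A.IsHermitian) (f : n → ℝ) :
    herm.conj hA f ^ 2 = herm.conj hA (fun i => f i ^ 2) := by
  rw [pow_two, herm.conj_mul]
  exact congrArg _ (funext fun i => (pow_two (f i)).symm)

lemma traceNorm_herm_eq_sum_abs {A : Matrix n n ℂ} (hA : A.IsHermitian) :
    traceNorm A = ∑ i, |hA.eigenvalues i| := by
  have hS : (herm.conj hA (fun i => |hA.eigenvalues i|)).PosSemidef :=
    herm.conj_posSemidef hA fun i => abs_nonneg _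
  have hsq : herm.conj hA (fun i => |hA.eigenvalues i|) ^ 2 = Aᴴ * A := by
    rw [herm.conj_sq, hA.eq]
    conv_rhs => rw [← herm.conj_eigenvalues hA, herm.conj_mul]
    exact congrArg _ (funext fun i => by simp [sq_abs, pow_two])
  rw [traceNorm_sqrt_eq hS hsq, herm.conj_trace]
  rw [← Complex.ofReal_sum, Complex.ofReal_re]

lemma traceNorm_psd {P : Matrix n n ℂ} (hP : P.PosSemidef) :
    traceNorm P = P.trace.re := by
  refine traceNorm_sqrt_eq hP ?_
  rw [pow_two, hP.1.eq]

lemma psd_trace_eq {P : Matrix n n ℂ} (hP : P.PosSemidef) :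
    P.trace = ((∑ i, hP.1.eigenvalues i : ℝ) : ℂ) := by
  conv_lhs => rw [← herm.conj_eigenvalues hP.1]
  rw [herm.conj_trace]
  push_cast
  rfl

lemma psd_trace_re_nonneg {P : Matrix n n ℂ} (hP : P.PosSemidef) : 0 ≤ P.trace.re := by
  rw [psd_trace_eq hP]
  simpa using Finset.sum_nonneg fun i _ => hP.eigenvalues_nonneg i

lemma psd_eq_zero_of_trace_eq_zero {P : Matrix n n ℂ} (hP : P.PosSemidef)
    (h : P.trace.re = 0) : P = 0 := by
  rw [psd_trace_eq hP] at h
  norm_cast at h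
  have hz : ∀ i ∈ Finset.univ, hP.1.eigenvalues i = 0 :=
    (Finset.sum_eq_zero_iff_of_nonneg fun i _ => hP.eigenvalues_nonneg i).mp h
  have hev : hP.1.eigenvalues = 0 := funext fun i => hz i (Finset.mem_univ i)
  conv_lhs => rw [← herm.conj_eigenvalues hP.1, hev]
  exact herm.conj_zero_fun hP.1

open scoped MatrixOrder in
lemma traceNorm_nonneg (X : Matrix n n ℂ) : 0 ≤ traceNorm X := by
  rw [traceNorm_eq_cfcSqrt]
  exact psd_trace_re_nonneg (CFC.sqrt_nonneg (Xᴴ * X)).posSemidef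

lemma traceNorm_herm_pos {A : Matrix n n ℂ} (hA : A.IsHermitian) (hA0 : A ≠ 0) :
    0 < traceNorm A := by
  rcases (traceNorm_nonneg A).lt_or_eq with h | h
  · exact h
  exfalso
  apply hA0
  rw [traceNorm_herm_eq_sum_abs hA] at h
  have hz : ∀ i ∈ Finset.univ, |hA.eigenvalues i| = 0 :=
    (Finset.sum_eq_zero_iff_of_nonneg fun i _ => abs_nonneg _).mp h.symm
  have hev : hA.eigenvalues = 0 := funext fun i => abs_eq_zero.mp (hz i (Finset.mem_univ i))
  conv_lhs => rw [← herm.conj_eigenvalues hA, hev]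
  exact herm.conj_zero_fun hA

lemma traceNorm_real_smul (c : ℝ) (X : Matrix n n ℂ) :
    traceNorm ((c : ℂ) • X) = |c| * traceNorm X := by
  have hP : (Xᴴ * X).PosSemidef := Matrix.posSemidef_conjTranspose_mul_self X
  have hSpsd : (herm.conj hP.1 (fun i => |c| * Real.sqrt (hP.1.eigenvalues i))).PosSemidef :=
    herm.conj_posSemidef _ fun i => mul_nonneg (abs_nonneg _) (Real.sqrt_nonneg _)
  have hst : star (c : ℂ) * (c : ℂ) = ((c ^ 2 : ℝ) : ℂ) := by
    rw [Complex.star_def, Complex.conj_ofReal]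
    push_cast
    ring
  have hsq : herm.conj hP.1 (fun i => |c| * Real.sqrt (hP.1.eigenvalues i)) ^ 2
      = ((c : ℂ) • X)ᴴ * ((c : ℂ) • X) := by
    rw [conjTranspose_smul, smul_mul_smul_comm, hst]
    conv_rhs => rw [← herm.conj_eigenvalues hP.1, herm.conj_smul]
    rw [herm.conj_sq]
    refine congrArg _ (funext fun i => ?_)
    rw [mul_pow, sq_abs, Real.sq_sqrt (hP.eigenvalues_nonneg i)]
    simp [pow_two]
  have htn : traceNorm X = ∑ i, Real.sqrt (hP.1.eigenvalues i) := by
    have h2 : (herm.conj hP.1 (fun i => Real.sqrt (hP.1.eigenvalues i))) ^ 2 = Xᴴ * X := by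
      rw [herm.conj_sq]
      conv_rhs => rw [← herm.conj_eigenvalues hP.1]
      exact congrArg _ (funext fun i => Real.sq_sqrt (hP.eigenvalues_nonneg i))
    rw [traceNorm_sqrt_eq (herm.conj_posSemidef _ fun i => Real.sqrt_nonneg _) h2,
      herm.conj_trace, ← Complex.ofReal_sum, Complex.ofReal_re]
  rw [traceNorm_sqrt_eq hSpsd hsq, herm.conj_trace, ← Complex.ofReal_sum, Complex.ofReal_re,
    htn, Finset.mul_sum]

end TraceNormBasics

section More
variable {n : Type*} [Fintype n] [DecidableEq n]

lemma pinching {X : Matrix n n ℂ} (hX : X.IsHermitian) (W : Matrix n n ℂ)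
    (hW : W ∈ Matrix.unitaryGroup n ℂ) :
    ∑ i, norm ((Wᴴ * X * W) i i) ≤ traceNorm X := by
  classical
  set U := (hX.eigenvectorUnitary : Matrix n n ℂ) with hU
  set V := star U * W with hV
  have hVV : V * star V = 1 := by
    rw [hV, StarMul.star_mul, star_star, mul_assoc, ← mul_assoc W, mem_unitaryGroup_iff.mp hW, one_mul,
      mem_unitaryGroup_iff'.mp hX.eigenvectorUnitary.2]
  have hXW : Wᴴ * X * W = Vᴴ * diagonal (Complex.ofReal ∘ hX.eigenvalues) * V := by
    rw [← Matrix.star_eq_conjTranspose V, ← Matrix.star_eq_conjTranspose W]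
    conv_lhs => rw [hX.spectral_theorem]
    rw [hV, StarMul.star_mul, star_star]
    simp only [Unitary.conjStarAlgAut_apply, ← hU, Matrix.mul_assoc]
    rfl
  have hentry : ∀ i, (Wᴴ * X * W) i i
      = ∑ j, star (V j i) * (hX.eigenvalues j : ℂ) * V j i := by
    intro i
    rw [hXW, Matrix.mul_apply]
    refine Finset.sum_congr rfl fun j _ => ?_
    rw [Matrix.mul_diagonal, Matrix.conjTranspose_apply]
    simp only [Function.comp_apply]
  have hrow : ∀ j, ∑ i, norm (V j i) ^ 2 = 1 := by
    intro j
    have h1 : (V * star V) j j = (1 : Matrix n n ℂ) j j := by rw [hVV]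
    rw [Matrix.mul_apply] at h1
    have h2 : ∀ i, V j i * (star V) i j = ((norm (V j i) ^ 2 : ℝ) : ℂ) := by
      intro i
      rw [Matrix.star_apply, Complex.star_def, Complex.mul_conj, Complex.normSq_eq_norm_sq]
    simp only [h2] at h1
    rw [← Complex.ofReal_sum, Matrix.one_apply_eq] at h1
    exact_mod_cast h1
  calc ∑ i, norm ((Wᴴ * X * W) i i)
      ≤ ∑ i, ∑ j, |hX.eigenvalues j| * norm (V j i) ^ 2 := by
        refine Finset.sum_le_sum fun i _ => ?_
        rw [hentry i]
        refine le_trans (norm_sum_le _ _) (Finset.sum_le_sum fun j _ => le_of_eq ?_)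
        rw [norm_mul, norm_mul, Complex.star_def, Complex.norm_conj, Complex.norm_real, Real.norm_eq_abs]
        ring
    _ = ∑ j, |hX.eigenvalues j| * ∑ i, norm (V j i) ^ 2 := by
        rw [Finset.sum_comm]
        simp [Finset.mul_sum]
    _ = ∑ j, |hX.eigenvalues j| := by simp [hrow]
    _ = traceNorm X := (traceNorm_herm_eq_sum_abs hX).symm


lemma traceNorm_neg (X : Matrix n n ℂ) : traceNorm (-X) = traceNorm X :=
  traceNorm_congr (by simp)

lemma traceNorm_zero : traceNorm (0 : Matrix n n ℂ) = 0 := by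
  rw [traceNorm_psd Matrix.PosSemidef.zero, trace_zero, Complex.zero_re]

lemma traceNorm_add_le {A B : Matrix n n ℂ} (hA : A.IsHermitian) (hB : B.IsHermitian) :
    traceNorm (A + B) ≤ traceNorm A + traceNorm B := by
  have hAB : (A + B).IsHermitian := hA.add hB
  set U := (hAB.eigenvectorUnitary : Matrix n n ℂ) with hU
  have hdiag : Uᴴ * (A + B) * U = diagonal (Complex.ofReal ∘ hAB.eigenvalues) := by
    rw [← Matrix.star_eq_conjTranspose]
    have hs := hAB.spectral_theorem
    rw [Unitary.conjStarAlgAut_apply] at hs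
    conv_lhs => rw [hs]
    rw [hU, ← mul_assoc, ← mul_assoc, Unitary.coe_star_mul_self, one_mul, mul_assoc,
      Unitary.coe_star_mul_self, mul_one]
    rfl
  calc traceNorm (A + B) = ∑ i, |hAB.eigenvalues i| := traceNorm_herm_eq_sum_abs hAB
    _ = ∑ i, norm ((Uᴴ * (A + B) * U) i i) := by
        rw [hdiag]
        refine Finset.sum_congr rfl fun i _ => ?_
        rw [diagonal_apply_eq, Function.comp_apply, Complex.norm_real, Real.norm_eq_abs]
    _ ≤ ∑ i, (norm ((Uᴴ * A * U) i i) + norm ((Uᴴ * B * U) i i)) := by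
        refine Finset.sum_le_sum fun i _ => ?_
        have hsplit : (Uᴴ * (A + B) * U) i i = (Uᴴ * A * U) i i + (Uᴴ * B * U) i i := by
          rw [mul_add, add_mul, Matrix.add_apply]
        rw [hsplit]
        exact norm_add_le _ _
    _ = (∑ i, norm ((Uᴴ * A * U) i i)) + ∑ i, norm ((Uᴴ * B * U) i i) :=
        Finset.sum_add_distrib
    _ ≤ traceNorm A + traceNorm B :=
        add_le_add (pinching hA U hAB.eigenvectorUnitary.2) (pinching hB U hAB.eigenvectorUnitary.2)

lemma traceNorm_sub_le {A B : Matrix n n ℂ} (hA : A.IsHermitian) (hB : B.IsHermitian) :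
    traceNorm (A - B) ≤ traceNorm A + traceNorm B := by
  rw [sub_eq_add_neg]
  calc traceNorm (A + -B) ≤ traceNorm A + traceNorm (-B) := traceNorm_add_le hA hB.neg
    _ = traceNorm A + traceNorm B := by rw [traceNorm_neg]

lemma jordan {A : Matrix n n ℂ} (hA : A.IsHermitian) :
    ∃ P Q : Matrix n n ℂ, P.PosSemidef ∧ Q.PosSemidef ∧ A = P - Q ∧
      traceNorm A = P.trace.re + Q.trace.re := by
  refine ⟨herm.conj hA (fun i => max (hA.eigenvalues i) 0),
    herm.conj hA (fun i => max (-hA.eigenvalues i) 0),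
    herm.conj_posSemidef hA fun i => le_max_right _ _,
    herm.conj_posSemidef hA fun i => le_max_right _ _, ?_, ?_⟩
  · rw [herm.conj_sub]
    conv_lhs => rw [← herm.conj_eigenvalues hA]
    exact congrArg _ (funext fun i => (max_zero_sub_max_neg_zero_eq_self _).symm)
  · rw [traceNorm_herm_eq_sum_abs hA, herm.conj_trace, herm.conj_trace,
      ← Complex.ofReal_sum, ← Complex.ofReal_sum, Complex.ofReal_re, Complex.ofReal_re,
      ← Finset.sum_add_distrib]
    exact Finset.sum_congr rfl fun i _ => (max_zero_add_max_neg_zero_eq_abs_self _).symm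

end More

lemma posSemidef_sum {n k : Type*} [Fintype n] [DecidableEq n] [Fintype k]
    (f : k → Matrix n n ℂ) (h : ∀ i, (f i).PosSemidef) : (∑ i, f i).PosSemidef := by
  classical
  refine Finset.sum_induction f _ (fun a b ha hb => ha.add hb) Matrix.PosSemidef.zero
    fun i _ => h i

section Channel
variable {dA dB : ℕ} {M : Matrix (Fin dA) (Fin dA) ℂ →ₗ[ℂ] Matrix (Fin dB) (Fin dB) ℂ}
  (hM : IsQuantumChannel M)
include hM

lemma channel_herm {A : Matrix (Fin dA) (Fin dA) ℂ} (hA : A.IsHermitian) :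
    (M A).IsHermitian := by
  obtain ⟨k, K, hK, -⟩ := hM
  rw [IsHermitian, hK, conjTranspose_sum]
  refine Finset.sum_congr rfl fun i _ => ?_
  rw [conjTranspose_mul, conjTranspose_mul, conjTranspose_conjTranspose, hA.eq, Matrix.mul_assoc]

lemma channel_psd {P : Matrix (Fin dA) (Fin dA) ℂ} (hP : P.PosSemidef) :
    (M P).PosSemidef := by
  obtain ⟨k, K, hK, -⟩ := hM
  rw [hK]
  exact posSemidef_sum _ fun i => hP.mul_mul_conjTranspose_same (K i)

lemma channel_trace (X : Matrix (Fin dA) (Fin dA) ℂ) : (M X).trace = X.trace := by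
  obtain ⟨k, K, hK, hsum⟩ := hM
  rw [hK, trace_sum]
  have : ∀ i, (K i * X * (K i)ᴴ).trace = ((K i)ᴴ * K i * X).trace := by
    intro i
    rw [trace_mul_cycle]
  simp only [this]
  rw [← trace_sum]
  have h2 : ∑ i, (K i)ᴴ * K i * X = (∑ i, (K i)ᴴ * K i) * X := (Finset.sum_mul _ _ _).symm
  rw [h2, hsum, one_mul]

lemma channel_contraction {A : Matrix (Fin dA) (Fin dA) ℂ} (hA : A.IsHermitian) :
    traceNorm (M A) ≤ traceNorm A := by
  obtain ⟨P, Q, hP, hQ, hPQ, htn⟩ := jordan hA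
  have hMP := channel_psd hM hP
  have hMQ := channel_psd hM hQ
  calc traceNorm (M A) = traceNorm (M P - M Q) := by rw [hPQ, map_sub]
    _ ≤ traceNorm (M P) + traceNorm (M Q) := traceNorm_sub_le hMP.1 hMQ.1
    _ = P.trace.re + Q.trace.re := by
        rw [traceNorm_psd hMP, traceNorm_psd hMQ, channel_trace hM, channel_trace hM]
    _ = traceNorm A := htn.symm

end Channel


lemma psd_real_smul {n : Type*} [Fintype n] [DecidableEq n] {P : Matrix n n ℂ}
    (hP : P.PosSemidef) {c : ℝ} (hc : 0 ≤ c) : ((c : ℂ) • P).PosSemidef := by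
  have h := herm.conj_eigenvalues hP.1
  rw [← h, herm.conj_smul]
  exact herm.conj_posSemidef hP.1 fun i => mul_nonneg hc (hP.eigenvalues_nonneg i)


section Main
variable {dA dB : ℕ}
  {N : Matrix (Fin dA) (Fin dA) ℂ →ₗ[ℂ] Matrix (Fin dB) (Fin dB) ℂ}
  {R : Matrix (Fin dB) (Fin dB) ℂ →ₗ[ℂ] Matrix (Fin dA) (Fin dA) ℂ}
  {ε : ℝ}

lemma correct_psd
    (hrec : ∀ ρ : Matrix (Fin dA) (Fin dA) ℂ, IsDensityMatrix ρ →
      traceNorm (R (N ρ) - ρ) ≤ ε)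
    {P : Matrix (Fin dA) (Fin dA) ℂ} (hP : P.PosSemidef) :
    traceNorm (P - R (N P)) ≤ ε * P.trace.re := by
  rcases (psd_trace_re_nonneg hP).eq_or_lt with h0 | h0
  · have hP0 : P = 0 := psd_eq_zero_of_trace_eq_zero hP h0.symm
    have hz : traceNorm (P - R (N P)) = 0 := by
      rw [hP0, map_zero, map_zero, sub_zero, traceNorm_zero]
    rw [hz, ← h0, mul_zero]
  · set t : ℝ := P.trace.re with ht
    have htC : P.trace = (t : ℂ) := by
      rw [psd_trace_eq hP, ht, psd_trace_eq hP, Complex.ofReal_re]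
    set σ := (((t)⁻¹ : ℝ) : ℂ) • P with hσ
    have hσdm : IsDensityMatrix σ := by
      refine ⟨psd_real_smul hP (inv_nonneg.mpr h0.le), ?_⟩
      rw [hσ, trace_smul, smul_eq_mul, htC, ← Complex.ofReal_mul, inv_mul_cancel₀ h0.ne',
        Complex.ofReal_one]
    have hPσ : P = ((t : ℝ) : ℂ) • σ := by
      rw [hσ, smul_smul, ← Complex.ofReal_mul, mul_inv_cancel₀ h0.ne', Complex.ofReal_one,
        one_smul]
    have key : P - R (N P) = ((t : ℝ) : ℂ) • (-(R (N σ) - σ)) := by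
      conv_lhs => rw [hPσ]
      rw [LinearMap.map_smul, LinearMap.map_smul, ← smul_sub, neg_sub]
    rw [key, traceNorm_real_smul, traceNorm_neg, abs_of_pos h0]
    rw [mul_comm]
    exact mul_le_mul_of_nonneg_right (hrec σ hσdm) h0.le
end Main

lemma basis_density {d : ℕ} (j : Fin d) :
    IsDensityMatrix (diagonal (fun i => if i = j then (1 : ℂ) else 0)) := by
  constructor
  · refine Matrix.PosSemidef.diagonal fun i => ?_
    dsimp only
    split_ifs
    · exact zero_le_one
    · exact le_refl 0
  · rw [trace_diagonal]
    simp

lemma real_smul_herm {n : Type*} [Fintype n] [DecidableEq n] (c : ℝ) {A : Matrix n n ℂ}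
    (hA : A.IsHermitian) : ((c : ℂ) • A).IsHermitian := by
  rw [IsHermitian, conjTranspose_smul, Complex.star_def, Complex.conj_ofReal, hA.eq]

lemma approx_bound {dA dB : ℕ}
    {N : Matrix (Fin dA) (Fin dA) ℂ →ₗ[ℂ] Matrix (Fin dB) (Fin dB) ℂ}
    {R : Matrix (Fin dB) (Fin dB) ℂ →ₗ[ℂ] Matrix (Fin dA) (Fin dA) ℂ} {ε : ℝ}
    (hN : IsQuantumChannel N) (hR : IsQuantumChannel R)
    (hrec : ∀ ρ : Matrix (Fin dA) (Fin dA) ℂ, IsDensityMatrix ρ →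
      traceNorm (R (N ρ) - ρ) ≤ ε)
    {Δ : Matrix (Fin dA) (Fin dA) ℂ} (hΔ : Δ.IsHermitian) :
    traceNorm (Δ - R (N Δ)) ≤ ε * traceNorm Δ := by
  obtain ⟨P, Q, hP, hQ, hPQ, htn⟩ := jordan hΔ
  have h1 : Δ - R (N Δ) = (P - R (N P)) - (Q - R (N Q)) := by
    rw [hPQ, map_sub, map_sub]
    abel
  have hherm1 : (P - R (N P)).IsHermitian := hP.1.sub (channel_herm hR (channel_herm hN hP.1))
  have hherm2 : (Q - R (N Q)).IsHermitian := hQ.1.sub (channel_herm hR (channel_herm hN hQ.1))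
  calc traceNorm (Δ - R (N Δ))
      ≤ traceNorm (P - R (N P)) + traceNorm (Q - R (N Q)) := by
        rw [h1]; exact traceNorm_sub_le hherm1 hherm2
    _ ≤ ε * P.trace.re + ε * Q.trace.re :=
        add_le_add (correct_psd hrec hP) (correct_psd hrec hQ)
    _ = ε * traceNorm Δ := by rw [htn]; ring


/-- **Approximate correctability implies approximate distinguishability preservation.**
If `N : A → B` (`dA ≥ 2`) is a quantum channel and there is a quantum channel `R : B → A` with
`‖R(N ρ) − ρ‖₁ ≤ ε` for every density matrix `ρ` on `A`, then `DPmin N ≥ 1 − 2ε`. -/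
theorem DPmin_ge_of_approx_correctable {dA dB : ℕ} (hdA : 2 ≤ dA) (ε : ℝ)
    (N : Matrix (Fin dA) (Fin dA) ℂ →ₗ[ℂ] Matrix (Fin dB) (Fin dB) ℂ)
    (hN : IsQuantumChannel N)
    (R : Matrix (Fin dB) (Fin dB) ℂ →ₗ[ℂ] Matrix (Fin dA) (Fin dA) ℂ)
    (hR : IsQuantumChannel R)
    (hrec : ∀ ρ : Matrix (Fin dA) (Fin dA) ℂ, IsDensityMatrix ρ →
      traceNorm (R (N ρ) - ρ) ≤ ε) :
    1 - 2 * ε ≤ DPmin N := by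

  classical
  set i0 : Fin dA := ⟨0, by omega⟩ with hi0
  set i1 : Fin dA := ⟨1, by omega⟩ with hi1
  have hi01 : i0 ≠ i1 := by
    simp [hi0, hi1, Fin.ext_iff]
  set ρ₀ := diagonal (fun i => if i = i0 then (1 : ℂ) else 0) with hρ₀
  set ρ₁ := diagonal (fun i => if i = i1 then (1 : ℂ) else 0) with hρ₁
  have hd₀ := basis_density i0
  have hd₁ := basis_density i1
  have hne01 : ρ₀ ≠ ρ₁ := by
    intro h
    have := congrFun (congrFun h i0) i0
    rw [hρ₀, hρ₁] at this
    simp [diagonal_apply_eq, hi01] at this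
  have hε : 0 ≤ ε := le_trans (traceNorm_nonneg _) (hrec ρ₀ hd₀)
  refine le_csInf ⟨_, 1, zero_le_one, le_refl 1, ρ₀, ρ₁, hd₀, hd₁, hne01, rfl⟩ ?_
  rintro x ⟨p, hp0, hp1, ρ, ρ', hρ, hρ', hne, rfl⟩
  set Δ := (p : ℂ) • ρ - ((1 - p : ℝ) : ℂ) • ρ' with hΔdef
  have hΔherm : Δ.IsHermitian := (real_smul_herm p hρ.1.1).sub (real_smul_herm _ hρ'.1.1)
  have hΔ0 : Δ ≠ 0 := by
    intro h
    have htr : Δ.trace = 0 := by rw [h, trace_zero]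
    rw [hΔdef, trace_sub, trace_smul, trace_smul, hρ.2, hρ'.2, smul_eq_mul, smul_eq_mul,
      mul_one, mul_one, sub_eq_zero] at htr
    have hp : p = 1 - p := by exact_mod_cast htr
    have hphalf : p = 1 / 2 := by linarith
    rw [hΔdef, sub_eq_zero] at h
    apply hne
    have h2 : (p : ℂ) ≠ 0 := by
      rw [hphalf]
      norm_num
    have h3 : (p : ℂ) • ρ = (p : ℂ) • ρ' := by rw [h, htr]
    exact smul_right_injective (Matrix (Fin dA) (Fin dA) ℂ) h2 h3
  have hD : 0 < traceNorm Δ := traceNorm_herm_pos hΔherm hΔ0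
  have hNΔ : N Δ = (p : ℂ) • N ρ - ((1 - p : ℝ) : ℂ) • N ρ' := by
    rw [hΔdef, map_sub, LinearMap.map_smul, LinearMap.map_smul]
  have hNherm : (N Δ).IsHermitian := channel_herm hN hΔherm
  have hRNherm : (R (N Δ)).IsHermitian := channel_herm hR hNherm
  have step1 : traceNorm Δ ≤ traceNorm (R (N Δ)) + traceNorm (Δ - R (N Δ)) := by
    have hsplit : Δ = R (N Δ) + (Δ - R (N Δ)) := by abel
    nth_rewrite 1 [hsplit]
    exact traceNorm_add_le hRNherm (hΔherm.sub hRNherm)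
  have step2 : traceNorm (R (N Δ)) ≤ traceNorm (N Δ) := channel_contraction hR hNherm
  have step3 : traceNorm (Δ - R (N Δ)) ≤ ε * traceNorm Δ := approx_bound hN hR hrec hΔherm
  have hkey : (1 - ε) * traceNorm Δ ≤ traceNorm (N Δ) := by nlinarith
  rw [← hNΔ]
  rw [le_div_iff₀ hD]
  nlinarith [mul_nonneg hε hD.le]
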